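/- Let W be a finite-dimensional complex vector space with conjugation σ, and let (A, C) be a weight-2 Hodge decomposition of (W, σ). Let S := {a + w | a ∈ A, w ∈ C, σ(w) = w} (an ℝ-subspace of W, the image of the canonical embedding). Then S ∩ (i • S) = A, where i • S = {i • s | s ∈ S}; that is, the distinguished complex subspace of the CR structure induced on the image of the canonical embedding is exactly A. -/
import Mathlib


/-- A weight-2 Hodge decomposition of `(W, σ)`: a pair of complex subspaces
`A, C ⊆ W` with `W = A ⊕ C ⊕ σ(A)` (every `w ∈ W` has a unique expression
`w = a + c + σ a'` with `a, a' ∈ A`, `c ∈ C`) and `σ(C) = C`. -/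
def IsHodge2 {W : Type*} [AddCommGroup W] [Module ℂ W] (σ : W →ₗ[ℝ] W)
    (A C : Submodule ℂ W) : Prop :=
  (∀ w : W, ∃! t : W × W × W,
      t.1 ∈ A ∧ t.2.1 ∈ C ∧ t.2.2 ∈ A ∧ w = t.1 + t.2.1 + σ t.2.2) ∧
  σ '' (C : Set W) = (C : Set W)

/-- **The distinguished complex subspace of the image of the canonical embedding.**
Let `W` be a finite-dimensional complex vector space with conjugation `σ`, and let
`(A, C)` be a weight-2 Hodge decomposition of `(W, σ)`.  Let
`S := {a + w | a ∈ A, w ∈ C, σ w = w}` be the image of the canonical embedding.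
Then `S ∩ (i • S) = A`: the distinguished complex subspace of the induced CR
structure on `S` is exactly `A`. -/
theorem canonical_embedding_image_CR_subspace
    {W : Type*} [AddCommGroup W] [Module ℂ W] [FiniteDimensional ℂ W]
    (σ : W →ₗ[ℝ] W)
    (hinv : ∀ w : W, σ (σ w) = w)
    (hconj : ∀ (c : ℂ) (w : W), σ (c • w) = (starRingEnd ℂ) c • σ w)
    (A C : Submodule ℂ W) (hAC : IsHodge2 σ A C) :
    {s : W | ∃ a ∈ A, ∃ w ∈ C, σ w = w ∧ s = a + w} ∩
        ((fun s : W => Complex.I • s) ''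
          {s : W | ∃ a ∈ A, ∃ w ∈ C, σ w = w ∧ s = a + w}) =
      (A : Set W) := by
  obtain ⟨huniq, hC⟩ := hAC
  ext s
  constructor
  · rintro ⟨⟨a, ha, w, hw, hσw, rfl⟩, t, ⟨a', ha', w', hw', hσw', rfl⟩, heq⟩
    simp only at heq
    -- heq : Complex.I • (a' + w') = a + w
    obtain ⟨t0, _, huni⟩ := huniq (a + w)
    have h1 := huni (a, w, 0) ⟨ha, hw, A.zero_mem, by simp⟩
    have h2 := huni (Complex.I • a', Complex.I • w', 0)
      ⟨A.smul_mem _ ha', C.smul_mem _ hw', A.zero_mem, by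
        rw [← heq, smul_add]; simp⟩
    have hww' : w = Complex.I • w' := by
      have := h1.trans h2.symm
      exact congrArg (fun t : W × W × W => t.2.1) this
    have hw0 : w = 0 := by
      have hσ : σ w = -(Complex.I • w') := by
        rw [hww', hconj, Complex.conj_I, hσw', neg_smul]
      have : w = -w := by rw [← hww'] at hσ; exact hσw.symm.trans hσ
      have h2w : (2 : ℂ) • w = 0 := by
        rw [two_smul]; nth_rewrite 2 [this]; simp
      rcases smul_eq_zero.mp h2w with h | h
      · exact absurd h (by norm_num)
      · exact h
    rw [hw0, add_zero]
    exact ha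
  · intro hs
    refine ⟨⟨s, hs, 0, C.zero_mem, by simp, by simp⟩,
      (-Complex.I) • s, ⟨(-Complex.I) • s, A.smul_mem _ hs, 0, C.zero_mem, by simp, by simp⟩, ?_⟩
    simp only
    rw [smul_smul]
    norm_num
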